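/- Let K be a nonempty compact Hausdorff space, let D be a closed subset of K, and let J_D = {h ∈ C(K) : h(t) = 0 for all t ∈ D}. Then for every nonempty compact subset F of J_D, the set cent_{J_D}(F) is nonempty, rad_{J_D}(F) = r_F, and cent_{J_D}(F) = {h ∈ J_D : for every t ∈ K, M_F(t) − r_F ≤ h(t) ≤ m_F(t) + r_F}. -/

import Mathlib

open Filter Topology MeasureTheory

/-- `r(x,B) = sup{‖x − b‖ : b ∈ B}`. -/
noncomputable def rMax {X : Type*} [NormedAddCommGroup X] (x : X) (B : Set X) : ℝ :=
  sSup ((fun b => ‖x - b‖) '' B)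

/-- Restricted Chebyshev radius of `B` in `V`: `rad_V(B) = inf{r(v,B) : v ∈ V}`. -/
noncomputable def chebRad {X : Type*} [NormedAddCommGroup X] (V B : Set X) : ℝ :=
  sInf ((fun v => rMax v B) '' V)

/-- Restricted Chebyshev centers of `B` in `V`: `{v ∈ V : r(v,B) = rad_V(B)}`. -/
def chebCent {X : Type*} [NormedAddCommGroup X] (V B : Set X) : Set X :=
  {v | v ∈ V ∧ rMax v B = chebRad V B}

/-- `diam(B) = sup{‖z₁ − z₂‖ : z₁, z₂ ∈ B}`. -/
noncomputable def setDiam {X : Type*} [NormedAddCommGroup X] (B : Set X) : ℝ :=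
  sSup ((fun p : X × X => ‖p.1 - p.2‖) '' (B ×ˢ B))

/-- `M_B(t) = sup{b(t) : b ∈ B}`. -/
noncomputable def funSup {K : Type*} [TopologicalSpace K] (B : Set C(K, ℝ)) (t : K) : ℝ :=
  sSup ((fun b : C(K, ℝ) => b t) '' B)

/-- `m_B(t) = inf{b(t) : b ∈ B}`. -/
noncomputable def funInf {K : Type*} [TopologicalSpace K] (B : Set C(K, ℝ)) (t : K) : ℝ :=
  sInf ((fun b : C(K, ℝ) => b t) '' B)

/-- `N_B(t) = limsup_{s→t} M_B(s)`. -/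
noncomputable def funLimsup {K : Type*} [TopologicalSpace K] (B : Set C(K, ℝ)) (t : K) : ℝ :=
  Filter.limsup (funSup B) (nhds t)

/-- `n_B(t) = liminf_{s→t} m_B(s)`. -/
noncomputable def funLiminf {K : Type*} [TopologicalSpace K] (B : Set C(K, ℝ)) (t : K) : ℝ :=
  Filter.liminf (funInf B) (nhds t)

/-- `r_B = (1/2)·sup{N_B(t) − n_B(t) : t ∈ K}`. -/
noncomputable def rNum {K : Type*} [TopologicalSpace K] (B : Set C(K, ℝ)) : ℝ :=
  (1 / 2) * sSup (Set.range fun t => funLimsup B t - funLiminf B t)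

/-- Chebyshev centers of compact subsets of `J_D = {h ∈ C(K) : h|_D = 0}` for closed `D`. -/
theorem chebCent_JD_of_isCompact {K : Type*} [TopologicalSpace K] [CompactSpace K] [T2Space K]
    [Nonempty K] (D : Set K) (hD : IsClosed D)
    (F : Set C(K, ℝ)) (hFJ : F ⊆ {h : C(K, ℝ) | ∀ t ∈ D, h t = 0})
    (hne : F.Nonempty) (hF : IsCompact F) :
    (chebCent {h : C(K, ℝ) | ∀ t ∈ D, h t = 0} F).Nonempty ∧
      chebRad {h : C(K, ℝ) | ∀ t ∈ D, h t = 0} F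
        = (1 / 2) * sSup (Set.range fun t => funSup F t - funInf F t) ∧
      chebCent {h : C(K, ℝ) | ∀ t ∈ D, h t = 0} F =
        {h : C(K, ℝ) | (∀ t ∈ D, h t = 0) ∧ ∀ t : K,
          funSup F t - (1 / 2) * sSup (Set.range fun s => funSup F s - funInf F s) ≤ h t ∧
            h t ≤ funInf F t + (1 / 2) * sSup (Set.range fun s => funSup F s - funInf F s)} := by
  classical
  set V : Set C(K, ℝ) := {h : C(K, ℝ) | ∀ t ∈ D, h t = 0} with hVdef
  obtain ⟨z₀, hz₀⟩ := hne
  obtain ⟨C, hC⟩ : ∃ C, ∀ z ∈ F, ‖z‖ ≤ C := by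
    obtain ⟨r, hr⟩ := hF.isBounded.subset_closedBall 0
    exact ⟨r, fun z hz => by simpa using hr hz⟩
  have himg : ∀ t : K, IsCompact ((fun z : C(K, ℝ) => z t) '' F) := fun t =>
    hF.image (continuous_eval_const t)
  have himgne : ∀ t : K, ((fun z : C(K, ℝ) => z t) '' F).Nonempty := fun t => ⟨_, z₀, hz₀, rfl⟩
  have hSup_mem : ∀ t, funSup F t ∈ (fun z : C(K, ℝ) => z t) '' F := fun t =>
    (himg t).sSup_mem (himgne t)
  have hInf_mem : ∀ t, funInf F t ∈ (fun z : C(K, ℝ) => z t) '' F := fun t =>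
    (himg t).sInf_mem (himgne t)
  have hle : ∀ t, ∀ z ∈ F, z t ≤ funSup F t := fun t z hz =>
    le_csSup (himg t).bddAbove ⟨z, hz, rfl⟩
  have hge : ∀ t, ∀ z ∈ F, funInf F t ≤ z t := fun t z hz =>
    csInf_le (himg t).bddBelow ⟨z, hz, rfl⟩
  -- range bounded above
  have habs : ∀ t, ∀ z ∈ F, |z t| ≤ C := fun t z hz =>
    le_trans (ContinuousMap.norm_coe_le_norm z t) (hC z hz)
  have hrangebdd : BddAbove (Set.range fun t => funSup F t - funInf F t) := by
    refine ⟨2 * C, ?_⟩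
    rintro x ⟨t, rfl⟩
    beta_reduce
    obtain ⟨zM, hzM, hzMt⟩ := hSup_mem t
    obtain ⟨zm, hzm, hzmt⟩ := hInf_mem t
    have h1 := habs t zM hzM
    have h2 := habs t zm hzm
    simp only at hzMt hzmt
    rw [← hzMt, ← hzmt]
    rw [abs_le] at h1 h2
    linarith [h1.2, h2.1]
  set S : ℝ := sSup (Set.range fun t => funSup F t - funInf F t) with hSdef
  set R : ℝ := (1 / 2) * S with hRdef
  have hSub : ∀ t, funSup F t - funInf F t ≤ S := fun t => le_csSup hrangebdd ⟨t, rfl⟩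
  have hS0 : 0 ≤ S := by
    obtain ⟨t₀⟩ := ‹Nonempty K›
    have := hSub t₀
    have := le_trans (hge t₀ z₀ hz₀) (hle t₀ z₀ hz₀)
    refine le_trans ?_ (le_csSup hrangebdd ⟨t₀, rfl⟩)
    beta_reduce
    linarith
  have hR0 : 0 ≤ R := by rw [hRdef]; linarith
  -- rMax image bdd above
  have hrMaxBdd : ∀ h : C(K, ℝ), BddAbove ((fun b => ‖h - b‖) '' F) := by
    intro h
    refine ⟨‖h‖ + C, ?_⟩
    rintro x ⟨z, hz, rfl⟩
    calc ‖h - z‖ ≤ ‖h‖ + ‖z‖ := norm_sub_le _ _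
      _ ≤ ‖h‖ + C := by linarith [hC z hz]
  have hnorm_le_rMax : ∀ h : C(K, ℝ), ∀ z ∈ F, ‖h - z‖ ≤ rMax h F := fun h z hz =>
    le_csSup (hrMaxBdd h) ⟨z, hz, rfl⟩
  have lower1 : ∀ (h : C(K, ℝ)) t, funSup F t - h t ≤ rMax h F := by
    intro h t
    obtain ⟨zM, hzM, hzMt⟩ := hSup_mem t
    simp only at hzMt
    rw [← hzMt]
    calc zM t - h t ≤ |h t - zM t| := by rw [abs_sub_comm]; exact le_abs_self _
      _ = ‖(h - zM) t‖ := by simp [Real.norm_eq_abs]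
      _ ≤ ‖h - zM‖ := ContinuousMap.norm_coe_le_norm _ _
      _ ≤ rMax h F := hnorm_le_rMax h zM hzM
  have lower2 : ∀ (h : C(K, ℝ)) t, h t - funInf F t ≤ rMax h F := by
    intro h t
    obtain ⟨zm, hzm, hzmt⟩ := hInf_mem t
    simp only at hzmt
    rw [← hzmt]
    calc h t - zm t ≤ |h t - zm t| := le_abs_self _
      _ = ‖(h - zm) t‖ := by simp [Real.norm_eq_abs]
      _ ≤ ‖h - zm‖ := ContinuousMap.norm_coe_le_norm _ _
      _ ≤ rMax h F := hnorm_le_rMax h zm hzm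
  have hlowerR : ∀ h : C(K, ℝ), R ≤ rMax h F := by
    intro h
    have : S ≤ 2 * rMax h F := by
      refine csSup_le ⟨_, Set.mem_range_self (Classical.arbitrary K)⟩ ?_
      rintro x ⟨t, rfl⟩
      beta_reduce
      linarith [lower1 h t, lower2 h t]
    rw [hRdef]; linarith
  have hband : ∀ h : C(K, ℝ),
      (∀ t, funSup F t - R ≤ h t ∧ h t ≤ funInf F t + R) → rMax h F ≤ R := by
    intro h hb
    refine csSup_le ⟨_, z₀, hz₀, rfl⟩ ?_
    rintro x ⟨z, hz, rfl⟩
    rw [ContinuousMap.norm_le _ hR0]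
    intro t
    rw [Real.norm_eq_abs, abs_le]
    have h1 := (hb t).1
    have h2 := (hb t).2
    have h3 := hle t z hz
    have h4 := hge t z hz
    constructor <;> simp only [ContinuousMap.sub_apply] <;> linarith
  -- the explicit center
  have hcontSup : Continuous (funSup F) := by
    have : Continuous ↿(fun (t : K) (z : C(K, ℝ)) => z t) :=
      continuous_eval.comp continuous_swap
    exact hF.continuous_sSup this
  have hcontInf : Continuous (funInf F) := by
    have : Continuous ↿(fun (t : K) (z : C(K, ℝ)) => z t) :=
      continuous_eval.comp continuous_swap
    exact hF.continuous_sInf this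
  set h₀ : C(K, ℝ) := ⟨fun t => (funSup F t + funInf F t) / 2, by fun_prop⟩ with hh₀def
  have hzeroD : ∀ t ∈ D, funSup F t = 0 ∧ funInf F t = 0 := by
    intro t ht
    obtain ⟨zM, hzM, hzMt⟩ := hSup_mem t
    obtain ⟨zm, hzm, hzmt⟩ := hInf_mem t
    simp only at hzMt hzmt
    exact ⟨hzMt ▸ hFJ hzM t ht, hzmt ▸ hFJ hzm t ht⟩
  have h₀V : h₀ ∈ V := by
    intro t ht
    obtain ⟨hM, hm⟩ := hzeroD t ht
    show (funSup F t + funInf F t) / 2 = 0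
    rw [hM, hm]; norm_num
  have h₀band : ∀ t, funSup F t - R ≤ h₀ t ∧ h₀ t ≤ funInf F t + R := by
    intro t
    have := hSub t
    show funSup F t - R ≤ (funSup F t + funInf F t) / 2 ∧
      (funSup F t + funInf F t) / 2 ≤ funInf F t + R
    rw [hRdef]
    constructor <;> linarith
  have h₀rMax : rMax h₀ F = R := le_antisymm (hband h₀ h₀band) (hlowerR h₀)
  have hrad : chebRad V F = R := by
    refine le_antisymm (csInf_le ⟨R, ?_⟩ ⟨h₀, h₀V, h₀rMax⟩) ?_
    · rintro x ⟨h, _, rfl⟩; exact hlowerR h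
    · refine le_csInf ⟨_, h₀, h₀V, rfl⟩ ?_
      rintro x ⟨h, _, rfl⟩; exact hlowerR h
  refine ⟨⟨h₀, h₀V, by rw [hrad]; exact h₀rMax⟩, hrad, ?_⟩
  ext h
  constructor
  · rintro ⟨hV, hr⟩
    rw [hrad] at hr
    refine ⟨hV, fun t => ⟨?_, ?_⟩⟩
    · have := lower1 h t; rw [hr] at this; linarith
    · have := lower2 h t; rw [hr] at this; linarith
  · rintro ⟨hV, hb⟩
    exact ⟨hV, by rw [hrad]; exact le_antisymm (hband h hb) (hlowerR h)⟩
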